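/- arXiv:math/0103224 — 4 statements merged into one kernel-verified Lean document; each statement's English description precedes it below -/
import Mathlib

section
/- Let L be a link in ℝ³ with thickness τ(L) = τ. Then any two distinct connected components of L are at (Euclidean) distance at least 2τ from each other. -/
open Set Metric Filter
open scoped InnerProductSpace
open scoped ENNReal NNReal

noncomputable section

/-- Points of ℝ³. -/
abbrev E3 : Type := EuclideanSpace ℝ (Fin 3)

/-- The radius of the circle through three points `x y z` of ℝ³:
the infimal possible common distance from a point `c` to all three of them.
For non-collinear points this is the circumradius; for collinear (distinct)
points the set is empty and the value is `∞`. -/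
def circumradius3 (x y z : E3) : ℝ≥0∞ :=
  sInf {r : ℝ≥0∞ | ∃ c : E3, edist c x = r ∧ edist c y = r ∧ edist c z = r}

/-- The thickness of a set `L ⊆ ℝ³`: the infimum of `circumradius3 x y z`
over triples of pairwise distinct points of `L`. -/
def thickness (L : Set E3) : ℝ≥0∞ :=
  ⨅ (x ∈ L) (y ∈ L) (z ∈ L) (_ : x ≠ y) (_ : y ≠ z) (_ : x ≠ z),
    circumradius3 x y z
/-- A link with components indexed by `ι`: each component is a simple closed
curve parametrized with period 1, and distinct components are disjoint. -/
def IsLink {ι : Type} (γ : ι → ℝ → E3) : Prop :=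
  (∀ i, Continuous (γ i)) ∧ (∀ i, Function.Periodic (γ i) 1) ∧
  (∀ i, ∀ s ∈ Ico (0:ℝ) 1, ∀ t ∈ Ico (0:ℝ) 1, γ i s = γ i t → s = t) ∧
  Pairwise fun i j => ∀ s t, γ i s ≠ γ j t

/-- If three pairwise distinct points of `L` lie on a common sphere of radius `ρ`,
then the thickness of `L` is at most `ρ`. -/
lemma thickness_le_of_sphere {L : Set E3} {x y z : E3} (hx : x ∈ L) (hy : y ∈ L)
    (hz : z ∈ L) (hxy : x ≠ y) (hyz : y ≠ z) (hxz : x ≠ z) {c : E3} {ρ : ℝ}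
    (h1 : dist c x = ρ) (h2 : dist c y = ρ) (h3 : dist c z = ρ) :
    thickness L ≤ ENNReal.ofReal ρ := by
  have hcr : circumradius3 x y z ≤ ENNReal.ofReal ρ := by
    apply sInf_le
    exact ⟨c, by rw [edist_dist, h1], by rw [edist_dist, h2], by rw [edist_dist, h3]⟩
  refine le_trans ?_ hcr
  unfold thickness
  exact iInf_le_of_le x (iInf_le_of_le hx (iInf_le_of_le y (iInf_le_of_le hy
    (iInf_le_of_le z (iInf_le_of_le hz (iInf_le_of_le hxy (iInf_le_of_le hyz
      (iInf_le _ hxz))))))))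

/-- A 1-periodic curve injective on `[0,1)` takes different values at parameters
whose difference lies in `(0,1)`. -/
lemma periodic_inj_ne {γ : ℝ → E3} (hp : Function.Periodic γ 1)
    (hinj : ∀ s ∈ Ico (0:ℝ) 1, ∀ t ∈ Ico (0:ℝ) 1, γ s = γ t → s = t)
    {a b : ℝ} (h0 : 0 < b - a) (h1 : b - a < 1) : γ a ≠ γ b := by
  intro h
  have ha : γ (Int.fract a) = γ a := by
    have h := hp.sub_int_mul_eq (x := a) ⌊a⌋
    rw [mul_one, Int.self_sub_floor] at h
    exact h
  have hb : γ (Int.fract b) = γ b := by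
    have h := hp.sub_int_mul_eq (x := b) ⌊b⌋
    rw [mul_one, Int.self_sub_floor] at h
    exact h
  have heq : Int.fract a = Int.fract b :=
    hinj _ ⟨Int.fract_nonneg a, Int.fract_lt_one a⟩ _
      ⟨Int.fract_nonneg b, Int.fract_lt_one b⟩ (by rw [ha, hb, h])
  have hfl : b - a = ((⌊b⌋ : ℝ) - (⌊a⌋ : ℝ)) := by
    have := heq
    unfold Int.fract at this
    linarith
  have h0' : (0:ℝ) < ((⌊b⌋ - ⌊a⌋ : ℤ) : ℝ) := by push_cast; linarith
  have h1' : ((⌊b⌋ - ⌊a⌋ : ℤ) : ℝ) < 1 := by push_cast; linarith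
  have h0i : 0 < (⌊b⌋ - ⌊a⌋ : ℤ) := by exact_mod_cast h0'
  have : (1:ℝ) ≤ ((⌊b⌋ - ⌊a⌋ : ℤ) : ℝ) := by exact_mod_cast h0i
  linarith

set_option maxHeartbeats 1000000 in
/-- If `L` is a link in ℝ³ with thickness `τ(L)`, then any two
distinct connected components of `L` are at Euclidean distance at least
`2 τ(L)` from each other. -/
theorem statement_2 {k : ℕ} (γ : Fin k → ℝ → E3) (hγ : IsLink γ)
    (i j : Fin k) (hij : i ≠ j) (s t : ℝ) :
    2 * thickness (⋃ i, range (γ i)) ≤ edist (γ i s) (γ j t) := by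
  obtain ⟨hcont, hper, hinj, hdisj⟩ := hγ
  set L : Set E3 := ⋃ i, range (γ i) with hLdef
  set X : E3 := γ i s with hXdef
  set Y : E3 := γ j t with hYdef
  have hXY : X ≠ Y := hdisj hij s t
  have hd : 0 < dist X Y := dist_pos.mpr hXY
  set d : ℝ := dist X Y with hddef
  -- the component of X
  set K : Set E3 := range (γ i) with hKdef
  have hKne : K.Nonempty := ⟨X, mem_range_self s⟩
  have hKc : IsCompact K := by
    have him : γ i '' Icc 0 (0 + 1) = range (γ i) := (hper i).image_Icc one_pos 0
    rw [hKdef, ← him]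
    exact (isCompact_Icc.image (hcont i))
  have hYK : Y ∉ K := by
    rintro ⟨s', hs'⟩
    exact hdisj hij s' t hs'
  have hXK : X ∈ K := mem_range_self s
  have hXL : X ∈ L := mem_iUnion.mpr ⟨i, hXK⟩
  have hYL : Y ∈ L := mem_iUnion.mpr ⟨j, mem_range_self t⟩
  have hKL : K ⊆ L := subset_iUnion (fun i => range (γ i)) i
  -- direction from Y to X
  set u : E3 := d⁻¹ • (X - Y) with hudef
  have hnormXY : ‖X - Y‖ = d := by rw [hddef, dist_eq_norm]
  have hu : ‖u‖ = 1 := by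
    rw [hudef, norm_smul, hnormXY, Real.norm_eq_abs, abs_of_pos (inv_pos.mpr hd)]
    field_simp
  -- family of centers
  set c : ℝ → E3 := fun ρ => Y + ρ • u with hcdef
  have hdiff : ∀ (z : E3) (ρ : ℝ), z - c ρ = (z - Y) - ρ • u := by
    intro z ρ
    simp only [hcdef]
    abel
  have hsq : ∀ (z : E3) (ρ : ℝ),
      dist z (c ρ) ^ 2 = ‖z - Y‖ ^ 2 - 2 * ρ * ⟪u, z - Y⟫_ℝ + ρ ^ 2 := by
    intro z ρ
    rw [dist_eq_norm, hdiff, norm_sub_sq_real, real_inner_smul_right, norm_smul,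
      real_inner_comm, hu, Real.norm_eq_abs]
    rw [mul_pow, sq_abs]
    ring
  have hcy : ∀ ρ : ℝ, 0 ≤ ρ → dist Y (c ρ) = ρ := by
    intro ρ hρ
    rw [dist_eq_norm, hdiff]
    simp [norm_smul, hu, Real.norm_eq_abs, abs_of_nonneg hρ]
  have hdistc : ∀ ρ σ : ℝ, dist (c ρ) (c σ) = |ρ - σ| := by
    intro ρ σ
    rw [dist_eq_norm]
    have : c ρ - c σ = (ρ - σ) • u := by
      simp only [hcdef, sub_smul]
      abel
    rw [this, norm_smul, hu, Real.norm_eq_abs, mul_one]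
  have key_le : ∀ (z : E3) (ρ : ℝ), 0 ≤ ρ →
      (dist z (c ρ) ≤ ρ ↔ ‖z - Y‖ ^ 2 ≤ 2 * ρ * ⟪u, z - Y⟫_ℝ) := by
    intro z ρ hρ
    constructor
    · intro h
      have h2 : dist z (c ρ) ^ 2 ≤ ρ ^ 2 := pow_le_pow_left₀ dist_nonneg h 2
      nlinarith [hsq z ρ]
    · intro h
      by_contra h'
      push_neg at h'
      have h2 : ρ ^ 2 < dist z (c ρ) ^ 2 := by nlinarith [dist_nonneg (x := z) (y := c ρ)]
      nlinarith [hsq z ρ]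
  have key_lt : ∀ (z : E3) (ρ : ℝ), 0 ≤ ρ →
      (dist z (c ρ) < ρ ↔ ‖z - Y‖ ^ 2 < 2 * ρ * ⟪u, z - Y⟫_ℝ) := by
    intro z ρ hρ
    constructor
    · intro h
      have h2 : dist z (c ρ) ^ 2 < ρ ^ 2 := by
        nlinarith [dist_nonneg (x := z) (y := c ρ)]
      nlinarith [hsq z ρ]
    · intro h
      by_contra h'
      push_neg at h'
      have h2 : ρ ^ 2 ≤ dist z (c ρ) ^ 2 := pow_le_pow_left₀ hρ h' 2
      nlinarith [hsq z ρ]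
  -- main claim
  have main : ∀ r : ℝ, d / 2 < r → r < d → thickness L ≤ ENNReal.ofReal r := by
    intro r hr1 hr2
    -- the extremal tangent sphere family
    set A : Set ℝ := {ρ : ℝ | ρ ∈ Icc 0 (d / 2) ∧ infDist (c ρ) K ≤ ρ} with hAdef
    have hAbdd : BddBelow A := ⟨0, fun ρ hρ => hρ.1.1⟩
    have hcc : Continuous c := by
      apply continuous_const.add
      exact continuous_id.smul continuous_const
    have hAclosed : IsClosed A := by
      have : A = Icc 0 (d / 2) ∩ (fun ρ => infDist (c ρ) K - ρ) ⁻¹' Iic 0 := by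
        ext ρ
        simp only [hAdef, mem_setOf_eq, mem_inter_iff, mem_preimage, mem_Iic, sub_nonpos]
      rw [this]
      exact isClosed_Icc.inter
        (IsClosed.preimage (((continuous_infDist_pt K).comp hcc).sub continuous_id) isClosed_Iic)
    have hcdX : dist X (c (d / 2)) = d / 2 := by
      rw [dist_eq_norm, hdiff]
      have : (X - Y) - (d / 2) • u = (1 / 2 : ℝ) • (X - Y) := by
        rw [hudef, smul_smul]
        rw [show d / 2 * d⁻¹ = 1 / 2 by field_simp]
        module
      rw [this, norm_smul, hnormXY, Real.norm_eq_abs]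
      rw [abs_of_nonneg (by norm_num)]
      ring
    have hAne : A.Nonempty := by
      refine ⟨d / 2, ⟨⟨by linarith, le_refl _⟩, ?_⟩⟩
      refine le_trans (infDist_le_dist_of_mem hXK) ?_
      rw [dist_comm, hcdX]
    set ρ₀ : ℝ := sInf A with hρ₀def
    have hρ₀A : ρ₀ ∈ A := hAclosed.csInf_mem hAne hAbdd
    have hρ₀0 : 0 ≤ ρ₀ := hρ₀A.1.1
    have hρ₀d : ρ₀ ≤ d / 2 := hρ₀A.1.2
    obtain ⟨z₁, hz₁K, hz₁d⟩ := hKc.exists_infDist_eq_dist hKne (c ρ₀)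
    have hz₁le : dist z₁ (c ρ₀) ≤ ρ₀ := by
      rw [dist_comm, ← hz₁d]; exact hρ₀A.2
    have hρ₀pos : 0 < ρ₀ := by
      rcases lt_or_eq_of_le hρ₀0 with h | h
      · exact h
      · exfalso
        have h0 : dist z₁ (c 0) ≤ 0 := by rw [h]; exact hz₁le
        have hz₁Y : z₁ = c 0 := dist_eq_zero.mp (le_antisymm h0 dist_nonneg)
        have hc0 : c 0 = Y := by simp [hcdef]
        exact hYK (by rw [← hc0, ← hz₁Y]; exact hz₁K)
    -- minimality: points inside the ball are on the sphere
    have hmin : ∀ z ∈ K, dist z (c ρ₀) ≤ ρ₀ → dist z (c ρ₀) = ρ₀ := by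
      intro z hzK hle
      by_contra hne
      have hlt : dist z (c ρ₀) < ρ₀ := lt_of_le_of_ne hle hne
      have hzy : z ≠ Y := fun h => hYK (h ▸ hzK)
      have h2 : ‖z - Y‖ ^ 2 < 2 * ρ₀ * ⟪u, z - Y⟫_ℝ := (key_lt z ρ₀ hρ₀0).mp hlt
      have hny : 0 < ‖z - Y‖ ^ 2 :=
        pow_pos (norm_pos_iff.mpr (sub_ne_zero.mpr hzy)) 2
      have hq : 0 < ⟪u, z - Y⟫_ℝ := by nlinarith
      set ρ' : ℝ := ‖z - Y‖ ^ 2 / (2 * ⟪u, z - Y⟫_ℝ) with hρ'def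
      have h2q : 0 < 2 * ⟪u, z - Y⟫_ℝ := by linarith
      have hρ'pos : 0 < ρ' := div_pos hny h2q
      have hρ'lt : ρ' < ρ₀ := by
        rw [hρ'def, div_lt_iff₀ (by positivity)]
        nlinarith
      have hρ'A : ρ' ∈ A := by
        refine ⟨⟨hρ'pos.le, le_trans hρ'lt.le hρ₀d⟩, ?_⟩
        refine le_trans (infDist_le_dist_of_mem hzK) ?_
        rw [dist_comm]
        rw [key_le z ρ' hρ'pos.le]
        have hgen : ∀ aa q : ℝ, q ≠ 0 → 2 * (aa / (2 * q)) * q = aa := by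
          intro aa q hqq; field_simp
        have heq : 2 * ρ' * ⟪u, z - Y⟫_ℝ = ‖z - Y‖ ^ 2 := by
          rw [hρ'def]; exact hgen _ _ (ne_of_gt hq)
        rw [heq]
      exact absurd (csInf_le hAbdd hρ'A) (not_le.mpr hρ'lt)
    by_cases hall : ∀ z ∈ K, dist z (c ρ₀) ≤ ρ₀
    · -- the whole component lies on the sphere: any three points work
      have hsph : ∀ z ∈ K, dist (c ρ₀) z = ρ₀ := by
        intro z hz
        rw [dist_comm]
        exact hmin z hz (hall z hz)
      set p₀ : E3 := γ i 0 with hp₀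
      set p₁ : E3 := γ i (1/3) with hp₁
      set p₂ : E3 := γ i (2/3) with hp₂
      have hmem : ∀ w : ℝ, γ i w ∈ K := fun w => mem_range_self w
      have hne01 : p₀ ≠ p₁ := by
        intro h
        have := hinj i 0 (by constructor <;> norm_num) (1/3) (by constructor <;> norm_num) h
        norm_num at this
      have hne12 : p₁ ≠ p₂ := by
        intro h
        have := hinj i (1/3) (by constructor <;> norm_num) (2/3)
          (by constructor <;> norm_num) h
        norm_num at this
      have hne02 : p₀ ≠ p₂ := by
        intro h
        have := hinj i 0 (by constructor <;> norm_num) (2/3) (by constructor <;> norm_num) h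
        norm_num at this
      have hth : thickness L ≤ ENNReal.ofReal ρ₀ :=
        thickness_le_of_sphere (hKL (hmem 0)) (hKL (hmem (1/3))) (hKL (hmem (2/3)))
          hne01 hne12 hne02 (hsph _ (hmem 0)) (hsph _ (hmem (1/3))) (hsph _ (hmem (2/3)))
      exact le_trans hth (ENNReal.ofReal_le_ofReal (by linarith))
    · -- main case: some point of the component is strictly outside
      push_neg at hall
      obtain ⟨z₀, hz₀K, hz₀gt⟩ := hall
      set D₀ : ℝ := dist z₀ (c ρ₀) with hD₀def
      set ε : ℝ := min ((r - ρ₀) / 2) ((D₀ - ρ₀) / 3) with hεdef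
      have hρ₀r : ρ₀ < r := lt_of_le_of_lt hρ₀d hr1
      have hεpos : 0 < ε := lt_min (by linarith) (by linarith)
      set ρ : ℝ := ρ₀ + ε with hρdef
      have hρpos : 0 < ρ := by linarith
      have hρr : ρ < r := by
        have : ε ≤ (r - ρ₀) / 2 := min_le_left _ _
        simp only [hρdef]; linarith
      -- z₀ is strictly outside the sphere of radius ρ
      have hout : ρ < dist z₀ (c ρ) := by
        have htr : D₀ ≤ dist z₀ (c ρ) + dist (c ρ) (c ρ₀) := dist_triangle _ _ _
        have hcc' : dist (c ρ) (c ρ₀) = ε := by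
          rw [hdistc]; simp [hρdef, abs_of_pos hεpos]
        have hε3 : ε ≤ (D₀ - ρ₀) / 3 := min_le_right _ _
        simp only [hρdef]; linarith
      -- z₁ is strictly inside the sphere of radius ρ
      have hz₁Y : z₁ ≠ Y := fun h => hYK (h ▸ hz₁K)
      have h2 : ‖z₁ - Y‖ ^ 2 ≤ 2 * ρ₀ * ⟪u, z₁ - Y⟫_ℝ := (key_le z₁ ρ₀ hρ₀0).mp hz₁le
      have hny : 0 < ‖z₁ - Y‖ ^ 2 :=
        pow_pos (norm_pos_iff.mpr (sub_ne_zero.mpr hz₁Y)) 2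
      have hq : 0 < ⟪u, z₁ - Y⟫_ℝ := by nlinarith
      have hin : dist z₁ (c ρ) < ρ := by
        rw [key_lt z₁ ρ hρpos.le]
        nlinarith
      -- crossing argument
      obtain ⟨a, ha⟩ := hz₁K
      obtain ⟨b, hb⟩ := hz₀K
      set f : ℝ → ℝ := fun w => dist (γ i w) (c ρ) with hfdef
      have hfc : Continuous f := (hcont i).dist continuous_const
      have hfa : f a < ρ := by rw [hfdef]; simp only; rw [ha]; exact hin
      have hfb : ρ < f b := by rw [hfdef]; simp only; rw [hb]; exact hout
      set b' : ℝ := a + Int.fract (b - a) with hb'def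
      have hγb' : γ i b' = γ i b := by
        have hper' := (hper i).sub_int_mul_eq (x := b) ⌊b - a⌋
        have : b' = b - (⌊b - a⌋ : ℝ) * 1 := by
          rw [hb'def]; unfold Int.fract; ring
        rw [this, hper']
      have hfb' : ρ < f b' := by
        rw [hfdef]; simp only; rw [hγb']; exact hfb
      have hfr0 : Int.fract (b - a) ≠ 0 := by
        intro h0
        have : b' = a := by rw [hb'def, h0, add_zero]
        rw [this] at hfb'
        exact absurd hfb' (not_lt.mpr hfa.le)
      have hab' : a < b' := by
        have := lt_of_le_of_ne (Int.fract_nonneg (b - a)) (Ne.symm hfr0)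
        rw [hb'def]; linarith
      have hb'a1 : b' < a + 1 := by
        have := Int.fract_lt_one (b - a)
        rw [hb'def]; linarith
      have hfa1 : f (a + 1) < ρ := by
        have : γ i (a + 1) = γ i a := (hper i) a
        rw [hfdef]; simp only; rw [this, ha]; exact hin
      -- two crossings
      have hiv1 : ρ ∈ f '' Ioo a b' :=
        intermediate_value_Ioo hab'.le hfc.continuousOn ⟨hfa, hfb'⟩
      have hiv2 : ρ ∈ f '' Ioo b' (a + 1) :=
        intermediate_value_Ioo' hb'a1.le hfc.continuousOn ⟨hfa1, hfb'⟩
      obtain ⟨w₁, hw₁mem, hw₁⟩ := hiv1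
      obtain ⟨w₂, hw₂mem, hw₂⟩ := hiv2
      have hwlt : 0 < w₂ - w₁ := by
        have := hw₁mem.2; have := hw₂mem.1; linarith
      have hwlt1 : w₂ - w₁ < 1 := by
        have := hw₁mem.1; have := hw₂mem.2; linarith
      have hne12 : γ i w₁ ≠ γ i w₂ := periodic_inj_ne (hper i) (hinj i) hwlt hwlt1
      have hne1Y : γ i w₁ ≠ Y := hdisj hij w₁ t
      have hne2Y : γ i w₂ ≠ Y := hdisj hij w₂ t
      have hw₁L : γ i w₁ ∈ L := hKL (mem_range_self w₁)
      have hw₂L : γ i w₂ ∈ L := hKL (mem_range_self w₂)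
      have hth : thickness L ≤ ENNReal.ofReal ρ := by
        refine thickness_le_of_sphere hw₁L hw₂L hYL hne12 hne2Y hne1Y
          (c := c ρ) ?_ ?_ ?_
        · rw [dist_comm]; exact hw₁
        · rw [dist_comm]; exact hw₂
        · rw [dist_comm]; exact hcy ρ hρpos.le
      exact le_trans hth (ENNReal.ofReal_le_ofReal hρr.le)
  -- conclude
  have hED : edist X Y = ENNReal.ofReal d := edist_dist X Y
  rw [hED]
  refine ENNReal.le_of_forall_pos_le_add ?_
  intro ε hε _
  set m : ℝ := min (ε : ℝ) (d / 2) with hmdef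
  have hm0 : 0 < m := lt_min (by exact_mod_cast hε) (by linarith)
  set r : ℝ := d / 2 + m / 2 with hrdef
  have hr1 : d / 2 < r := by rw [hrdef]; linarith
  have hr2 : r < d := by
    have : m ≤ d / 2 := min_le_right _ _
    rw [hrdef]; linarith
  have hth := main r hr1 hr2
  calc 2 * thickness L ≤ 2 * ENNReal.ofReal r := by
        exact mul_le_mul_right hth 2
    _ = ENNReal.ofReal (2 * r) := by
        rw [ENNReal.ofReal_mul (by norm_num : (0:ℝ) ≤ 2), ENNReal.ofReal_ofNat]
    _ = ENNReal.ofReal (d + m) := by rw [hrdef]; ring_nf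
    _ ≤ ENNReal.ofReal d + (ε : ℝ≥0∞) := by
        rw [ENNReal.ofReal_add hd.le hm0.le]
        refine add_le_add_right ?_ _
        calc ENNReal.ofReal m ≤ ENNReal.ofReal (ε : ℝ) :=
              ENNReal.ofReal_le_ofReal (min_le_left _ _)
          _ = (ε : ℝ≥0∞) := ENNReal.ofReal_coe_nnreal
end
end

section
/- Thickness is upper semicontinuous with respect to the C^0 topology on the space of Lipschitz (C^{0,1}) closed curves: if closed curves L_i converge uniformly (with respect to constant-speed parametrizations) to a closed curve L, then τ(L) ≥ limsup_i τ(L_i). -/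
open Set Metric Filter Topology
open scoped ENNReal NNReal

noncomputable section

open scoped RealInnerProductSpace

/-- Equidistance from two points is a linear condition. -/
lemma eqdist_iff (a p q : E3) :
    dist a p = dist a q ↔ 2 * ⟪q - p, a⟫ = ‖q‖ ^ 2 - ‖p‖ ^ 2 := by
  have hp : ‖a - p‖ ^ 2 = ‖a‖ ^ 2 - 2 * ⟪a, p⟫ + ‖p‖ ^ 2 := norm_sub_sq_real a p
  have hq : ‖a - q‖ ^ 2 = ‖a‖ ^ 2 - 2 * ⟪a, q⟫ + ‖q‖ ^ 2 := norm_sub_sq_real a q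
  have hsub : ⟪q - p, a⟫ = ⟪a, q⟫ - ⟪a, p⟫ := by
    rw [inner_sub_left, real_inner_comm q a, real_inner_comm p a]
  constructor
  · intro h
    have h2 : ‖a - p‖ ^ 2 = ‖a - q‖ ^ 2 := by
      rw [← dist_eq_norm, ← dist_eq_norm, h]
    rw [hsub]; linarith
  · intro h
    have h2 : ‖a - p‖ ^ 2 = ‖a - q‖ ^ 2 := by rw [hsub] at h; linarith
    rw [dist_eq_norm, dist_eq_norm, ← Real.sqrt_sq (norm_nonneg (a - p)),
      ← Real.sqrt_sq (norm_nonneg (a - q)), h2]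

/-- Degenerate Gram determinant means linear dependence. -/
lemma collin_of_gram {A1 A2 : E3} (hA1 : A1 ≠ 0)
    (h : ‖A1‖ ^ 2 * ‖A2‖ ^ 2 - ⟪A1, A2⟫ ^ 2 = 0) :
    A2 = (⟪A1, A2⟫ / ‖A1‖ ^ 2) • A1 := by
  have hn : ‖A1‖ ^ 2 ≠ 0 := pow_ne_zero 2 (norm_ne_zero_iff.mpr hA1)
  have hv : ‖(‖A1‖ ^ 2) • A2 - ⟪A1, A2⟫ • A1‖ ^ 2 = 0 := by
    rw [norm_sub_sq_real, real_inner_smul_left, real_inner_smul_right, norm_smul, norm_smul]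
    have h1 : ‖(‖A1‖ ^ 2 : ℝ)‖ = ‖A1‖ ^ 2 := by
      rw [Real.norm_eq_abs, abs_of_nonneg (by positivity)]
    have h2 : ‖⟪A1, A2⟫‖ ^ 2 = ⟪A1, A2⟫ ^ 2 := by
      rw [Real.norm_eq_abs, sq_abs]
    rw [mul_pow, mul_pow, h1, h2, real_inner_comm A2 A1]
    linear_combination ‖A1‖ ^ 2 * h - ‖A1‖ ^ 2 * (⟪A1, A2⟫ + ⟪A2, A1⟫) * real_inner_comm A1 A2
  have hvz : (‖A1‖ ^ 2) • A2 = ⟪A1, A2⟫ • A1 := by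
    have := pow_eq_zero_iff (n := 2) (by norm_num) |>.mp hv
    exact sub_eq_zero.mp (norm_eq_zero.mp this)
  calc A2 = (‖A1‖ ^ 2)⁻¹ • ((‖A1‖ ^ 2) • A2) := by
        rw [smul_smul, inv_mul_cancel₀ hn, one_smul]
    _ = (‖A1‖ ^ 2)⁻¹ • (⟪A1, A2⟫ • A1) := by rw [hvz]
    _ = (⟪A1, A2⟫ / ‖A1‖ ^ 2) • A1 := by rw [smul_smul, div_eq_inv_mul]

/-- Three pairwise distinct points admitting an equidistant center are not collinear
(nondegenerate Gram determinant). -/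
lemma gram_ne {x y z c : E3} (hxy : x ≠ y) (hyz : y ≠ z) (hxz : x ≠ z)
    (h1 : dist c x = dist c y) (h2 : dist c y = dist c z) :
    ‖y - x‖ ^ 2 * ‖z - y‖ ^ 2 - ⟪y - x, z - y⟫ ^ 2 ≠ 0 := by
  intro hD
  have hA1 : y - x ≠ 0 := sub_ne_zero.mpr hxy.symm
  have hA2 : z - y ≠ 0 := sub_ne_zero.mpr hyz.symm
  have hn : ‖y - x‖ ^ 2 ≠ 0 := pow_ne_zero 2 (norm_ne_zero_iff.mpr hA1)
  set t : ℝ := ⟪y - x, z - y⟫ / ‖y - x‖ ^ 2 with ht_def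
  have hA2t : z - y = t • (y - x) := collin_of_gram hA1 hD
  have ht : t ≠ 0 := by
    intro h
    exact hA2 (by rw [hA2t, h, zero_smul])
  have e1 : 2 * ⟪y - x, c⟫ = ‖y‖ ^ 2 - ‖x‖ ^ 2 := (eqdist_iff c x y).mp h1
  have e2 : 2 * ⟪z - y, c⟫ = ‖z‖ ^ 2 - ‖y‖ ^ 2 := (eqdist_iff c y z).mp h2
  have e2' : 2 * (t * ⟪y - x, c⟫) = ‖z‖ ^ 2 - ‖y‖ ^ 2 := by
    rw [← e2, hA2t, real_inner_smul_left]
  have hz : z = y + t • (y - x) := by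
    rw [← hA2t]; abel
  have hnz : ‖z‖ ^ 2 = ‖y‖ ^ 2 + 2 * (t * ⟪y, y - x⟫) + t ^ 2 * ‖y - x‖ ^ 2 := by
    rw [hz, norm_add_sq_real, real_inner_smul_right, norm_smul, mul_pow, Real.norm_eq_abs,
      sq_abs]
  have hxe : x = y - (y - x) := by abel
  have hnx : ‖x‖ ^ 2 = ‖y‖ ^ 2 - 2 * ⟪y, y - x⟫ + ‖y - x‖ ^ 2 := by
    nth_rewrite 1 [hxe]
    exact norm_sub_sq_real y (y - x)
  have key : (t + 1) * (t * ‖y - x‖ ^ 2) = 0 := by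
    linear_combination t * e1 - e2' - hnz - t * hnx
  have ht1 : t = -1 := by
    rcases mul_eq_zero.mp key with h | h
    · linarith
    · rcases mul_eq_zero.mp h with h' | h'
      · exact absurd h' ht
      · exact absurd h' hn
  apply hxz
  have : z = x := by rw [hz, ht1, neg_one_smul]; abel
  exact this.symm

/-- Solving the 2×2 linear system. -/
lemma solve2 (a b g E1 E2 : ℝ) (hD : a * b - g ^ 2 ≠ 0) :
    ((E1 * b - E2 * g) / (a * b - g ^ 2)) * a + ((E2 * a - E1 * g) / (a * b - g ^ 2)) * g = E1
      ∧ ((E1 * b - E2 * g) / (a * b - g ^ 2)) * g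
        + ((E2 * a - E1 * g) / (a * b - g ^ 2)) * b = E2 := by
  constructor <;> (rw [div_mul_eq_mul_div, div_mul_eq_mul_div, ← add_div, div_eq_iff hD]; ring)

/-- Key perturbation lemma: if `c` is equidistant from three pairwise distinct points
`x y z`, and sequences `u v w` converge to `x y z`, then there are points `cs n`
eventually equidistant from `u n, v n, w n`, with common distance converging to
`dist c x`. -/
lemma key_perturb {x y z c : E3} (hxy : x ≠ y) (hyz : y ≠ z) (hxz : x ≠ z)
    (h1 : dist c x = dist c y) (h2 : dist c y = dist c z)
    {u v w : ℕ → E3} (hu : Tendsto u atTop (𝓝 x)) (hv : Tendsto v atTop (𝓝 y))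
    (hw : Tendsto w atTop (𝓝 z)) :
    ∃ cs : ℕ → E3,
      (∀ᶠ n in atTop, dist (cs n) (u n) = dist (cs n) (v n) ∧
        dist (cs n) (v n) = dist (cs n) (w n)) ∧
      Tendsto (fun n => dist (cs n) (u n)) atTop (𝓝 (dist c x)) := by
  set n1 : ℕ → E3 := fun n => v n - u n with hn1_def
  set n2 : ℕ → E3 := fun n => w n - v n with hn2_def
  set e1 : ℕ → ℝ := fun n => (‖v n‖ ^ 2 - ‖u n‖ ^ 2) / 2 - ⟪n1 n, c⟫ with he1_def
  set e2 : ℕ → ℝ := fun n => (‖w n‖ ^ 2 - ‖v n‖ ^ 2) / 2 - ⟪n2 n, c⟫ with he2_def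
  set D : ℕ → ℝ := fun n => ‖n1 n‖ ^ 2 * ‖n2 n‖ ^ 2 - ⟪n1 n, n2 n⟫ ^ 2 with hD_def
  set al : ℕ → ℝ := fun n => (e1 n * ‖n2 n‖ ^ 2 - e2 n * ⟪n1 n, n2 n⟫) / D n with hal_def
  set be : ℕ → ℝ := fun n => (e2 n * ‖n1 n‖ ^ 2 - e1 n * ⟪n1 n, n2 n⟫) / D n with hbe_def
  set cs : ℕ → E3 := fun n => c + al n • n1 n + be n • n2 n with hcs_def
  -- limits
  have hA1 : Tendsto n1 atTop (𝓝 (y - x)) := hv.sub hu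
  have hA2 : Tendsto n2 atTop (𝓝 (z - y)) := hw.sub hv
  have hD0 : ‖y - x‖ ^ 2 * ‖z - y‖ ^ 2 - ⟪y - x, z - y⟫ ^ 2 ≠ 0 :=
    gram_ne hxy hyz hxz h1 h2
  have hD : Tendsto D atTop (𝓝 (‖y - x‖ ^ 2 * ‖z - y‖ ^ 2 - ⟪y - x, z - y⟫ ^ 2)) :=
    ((hA1.norm.pow 2).mul (hA2.norm.pow 2)).sub ((hA1.inner hA2).pow 2)
  have he1lim : Tendsto e1 atTop (𝓝 0) := by
    have l1 : Tendsto e1 atTop (𝓝 ((‖y‖ ^ 2 - ‖x‖ ^ 2) / 2 - ⟪y - x, c⟫)) :=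
      (((hv.norm.pow 2).sub (hu.norm.pow 2)).div_const 2).sub (hA1.inner tendsto_const_nhds)
    have h0 : (‖y‖ ^ 2 - ‖x‖ ^ 2) / 2 - ⟪y - x, c⟫ = 0 := by
      have := (eqdist_iff c x y).mp h1; linarith
    rwa [h0] at l1
  have he2lim : Tendsto e2 atTop (𝓝 0) := by
    have l1 : Tendsto e2 atTop (𝓝 ((‖z‖ ^ 2 - ‖y‖ ^ 2) / 2 - ⟪z - y, c⟫)) :=
      (((hw.norm.pow 2).sub (hv.norm.pow 2)).div_const 2).sub (hA2.inner tendsto_const_nhds)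
    have h0 : (‖z‖ ^ 2 - ‖y‖ ^ 2) / 2 - ⟪z - y, c⟫ = 0 := by
      have := (eqdist_iff c y z).mp h2; linarith
    rwa [h0] at l1
  have hallim : Tendsto al atTop (𝓝 0) := by
    have := ((he1lim.mul (hA2.norm.pow 2)).sub (he2lim.mul (hA1.inner hA2))).div hD hD0
    simp at this; exact this
  have hbelim : Tendsto be atTop (𝓝 0) := by
    have := ((he2lim.mul (hA1.norm.pow 2)).sub (he1lim.mul (hA1.inner hA2))).div hD hD0
    simp at this; exact this
  have hcslim : Tendsto cs atTop (𝓝 c) := by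
    have := (tendsto_const_nhds (x := c) (f := atTop)).add
      ((hallim.smul hA1).add (hbelim.smul hA2))
    simp only [zero_smul, add_zero] at this
    simpa [hcs_def, add_assoc] using this
  refine ⟨cs, ?_, hcslim.dist hu⟩
  have hDne : ∀ᶠ n in atTop, D n ≠ 0 := hD.eventually_ne hD0
  filter_upwards [hDne] with n hDn
  have hsol := solve2 (‖n1 n‖ ^ 2) (‖n2 n‖ ^ 2) (⟪n1 n, n2 n⟫) (e1 n) (e2 n) hDn
  constructor
  · rw [eqdist_iff]
    have hinner : ⟪v n - u n, cs n⟫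
        = ⟪n1 n, c⟫ + (al n * ‖n1 n‖ ^ 2 + be n * ⟪n1 n, n2 n⟫) := by
      show ⟪n1 n, c + al n • n1 n + be n • n2 n⟫ = _
      rw [inner_add_right, inner_add_right, real_inner_smul_right, real_inner_smul_right,
        real_inner_self_eq_norm_sq]
      ring
    rw [hinner]
    have h1' : al n * ‖n1 n‖ ^ 2 + be n * ⟪n1 n, n2 n⟫ = e1 n := hsol.1
    rw [h1', he1_def]
    ring
  · rw [eqdist_iff]
    have hinner : ⟪w n - v n, cs n⟫
        = ⟪n2 n, c⟫ + (al n * ⟪n1 n, n2 n⟫ + be n * ‖n2 n‖ ^ 2) := by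
      show ⟪n2 n, c + al n • n1 n + be n • n2 n⟫ = _
      rw [inner_add_right, inner_add_right, real_inner_smul_right, real_inner_smul_right,
        real_inner_self_eq_norm_sq, real_inner_comm (n2 n) (n1 n)]
      ring
    rw [hinner]
    have h2' : al n * ⟪n1 n, n2 n⟫ + be n * ‖n2 n‖ ^ 2 = e2 n := hsol.2
    rw [h2', he2_def]
    ring

/-- Thickness is upper semicontinuous with respect to the `C⁰`
topology on the space of Lipschitz (`C^{0,1}`) closed curves: if closed Lipschitz
curves `γ n` (parametrized with period 1) converge uniformly to a closed
Lipschitz curve `γ₀`, then `limsup τ(γ n) ≤ τ(γ₀)`. -/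
theorem statement_3 (γ : ℕ → ℝ → E3) (γ₀ : ℝ → E3)
    (hper : ∀ n, Function.Periodic (γ n) 1)
    (hper₀ : Function.Periodic γ₀ 1)
    (hlip : ∀ n, ∃ K : ℝ≥0, LipschitzWith K (γ n))
    (hlip₀ : ∃ K : ℝ≥0, LipschitzWith K γ₀)
    (hconv : TendstoUniformly γ γ₀ atTop) :
    limsup (fun n => thickness (range (γ n))) atTop ≤ thickness (range γ₀) := by
  rw [thickness]
  refine le_iInf fun x => le_iInf fun hx => le_iInf fun y => le_iInf fun hy =>
    le_iInf fun z => le_iInf fun hz => le_iInf fun hxy => le_iInf fun hyz =>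
    le_iInf fun hxz => ?_
  rw [circumradius3]
  refine le_sInf fun r hr => ?_
  obtain ⟨c, hcx, hcy, hcz⟩ := hr
  obtain ⟨s, rfl⟩ := hx
  obtain ⟨t, rfl⟩ := hy
  obtain ⟨q, rfl⟩ := hz
  have h1 : dist c (γ₀ s) = dist c (γ₀ t) := by
    rw [dist_edist, dist_edist, hcx, hcy]
  have h2 : dist c (γ₀ t) = dist c (γ₀ q) := by
    rw [dist_edist, dist_edist, hcy, hcz]
  have hu : Tendsto (fun n => γ n s) atTop (𝓝 (γ₀ s)) := hconv.tendsto_at s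
  have hv : Tendsto (fun n => γ n t) atTop (𝓝 (γ₀ t)) := hconv.tendsto_at t
  have hw : Tendsto (fun n => γ n q) atTop (𝓝 (γ₀ q)) := hconv.tendsto_at q
  obtain ⟨cs, hev, hlim⟩ := key_perturb hxy hyz hxz h1 h2 hu hv hw
  -- eventual distinctness
  have hne1 : ∀ᶠ n in atTop, γ n s ≠ γ n t := by
    have hd : Tendsto (fun n => dist (γ n s) (γ n t)) atTop (𝓝 (dist (γ₀ s) (γ₀ t))) :=
      hu.dist hv
    filter_upwards [hd.eventually_ne (dist_ne_zero.mpr hxy)] with n hn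
    exact fun h => hn (by rw [h, dist_self])
  have hne2 : ∀ᶠ n in atTop, γ n t ≠ γ n q := by
    have hd : Tendsto (fun n => dist (γ n t) (γ n q)) atTop (𝓝 (dist (γ₀ t) (γ₀ q))) :=
      hv.dist hw
    filter_upwards [hd.eventually_ne (dist_ne_zero.mpr hyz)] with n hn
    exact fun h => hn (by rw [h, dist_self])
  have hne3 : ∀ᶠ n in atTop, γ n s ≠ γ n q := by
    have hd : Tendsto (fun n => dist (γ n s) (γ n q)) atTop (𝓝 (dist (γ₀ s) (γ₀ q))) :=
      hu.dist hw
    filter_upwards [hd.eventually_ne (dist_ne_zero.mpr hxz)] with n hn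
    exact fun h => hn (by rw [h, dist_self])
  -- eventual bound on thickness
  have hbound : ∀ᶠ n in atTop,
      thickness (range (γ n)) ≤ edist (cs n) (γ n s) := by
    filter_upwards [hev, hne1, hne2, hne3] with n hn hn1 hn2 hn3
    calc thickness (range (γ n)) ≤ circumradius3 (γ n s) (γ n t) (γ n q) := by
          refine iInf_le_of_le (γ n s) (iInf_le_of_le (mem_range_self s)
            (iInf_le_of_le (γ n t) (iInf_le_of_le (mem_range_self t)
            (iInf_le_of_le (γ n q) (iInf_le_of_le (mem_range_self q)
            (iInf_le_of_le hn1 (iInf_le_of_le hn2 (iInf_le _ hn3))))))))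
      _ ≤ edist (cs n) (γ n s) := by
          refine sInf_le ⟨cs n, rfl, ?_, ?_⟩
          · rw [edist_dist, edist_dist, hn.1]
          · rw [edist_dist, edist_dist, hn.1, hn.2]
  -- conclude
  have htend : Tendsto (fun n => edist (cs n) (γ n s)) atTop (𝓝 r) := by
    have : Tendsto (fun n => ENNReal.ofReal (dist (cs n) (γ n s))) atTop
        (𝓝 (ENNReal.ofReal (dist c (γ₀ s)))) :=
      (ENNReal.continuous_ofReal.tendsto _).comp hlim
    simp only [← edist_dist] at this
    rwa [hcx] at this
  calc limsup (fun n => thickness (range (γ n))) atTop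
      ≤ limsup (fun n => edist (cs n) (γ n s)) atTop := limsup_le_limsup hbound
    _ = r := htend.limsup_eq
end
end

section
/- Let K be a closed rectifiable curve in ℝ³ and let p be a point lying on a chord of K (i.e., on the line segment between two points of K) but not on K itself. Then the cone angle of K at p is at least 2π; that is, the radial projection of K to the unit sphere centered at p has length at least 2π. -/
open Set Metric Filter
open scoped ENNReal NNReal

noncomputable section

/-- The radial projection of `x` to the unit sphere centered at `p`. -/
def sphProj (p x : E3) : E3 := ‖x - p‖⁻¹ • (x - p)

/-- The cone angle at `p` of a closed curve parametrized with period 1: the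
length of the radial projection of the curve to the unit sphere around `p`. -/
def coneAngle (γ : ℝ → E3) (p : E3) : ℝ≥0∞ :=
  eVariationOn (fun t => sphProj p (γ t)) (Icc 0 1)

namespace Stmt8

open InnerProductGeometry
open scoped RealInnerProductSpace

variable {V : Type*} [NormedAddCommGroup V] [InnerProductSpace ℝ V]

lemma sq_eq_of_nonneg {a b : ℝ} (ha : 0 ≤ a) (hb : 0 ≤ b) (h : a ^ 2 = b ^ 2) : a = b := by
  nlinarith [sq_nonneg (a - b), sq_nonneg (a + b)]

lemma inner_eq_cos {u v : V} (hu : ‖u‖ = 1) (hv : ‖v‖ = 1) :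
    ⟪u, v⟫ = Real.cos (angle u v) := by
  rw [cos_angle, hu, hv]; simp

lemma norm_sub_unit {u v : V} (hu : ‖u‖ = 1) (hv : ‖v‖ = 1) :
    ‖u - v‖ = 2 * Real.sin (angle u v / 2) := by
  have h2 : ‖u - v‖ ^ 2 = 2 - 2 * Real.cos (angle u v) := by
    rw [norm_sub_sq_real, hu, hv, inner_eq_cos hu hv]; ring
  have hs : Real.sin (angle u v / 2) ^ 2 = 1 / 2 - Real.cos (angle u v) / 2 := by
    rw [Real.sin_sq_eq_half_sub]; ring_nf
  apply sq_eq_of_nonneg (norm_nonneg _)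
  · have h0 := angle_nonneg u v
    have h1 := angle_le_pi u v
    have : 0 ≤ Real.sin (angle u v / 2) :=
      Real.sin_nonneg_of_nonneg_of_le_pi (by linarith) (by linarith [Real.pi_pos])
    linarith
  · rw [h2]; nlinarith [hs]

lemma mul_cos_le_sin {x : ℝ} (h0 : 0 ≤ x) (h1 : x ≤ Real.pi / 2) :
    x * Real.cos x ≤ Real.sin x := by
  rcases eq_or_lt_of_le h0 with rfl | h0'
  · simp
  rcases eq_or_lt_of_le h1 with h | h1'
  · rw [h, Real.cos_pi_div_two, Real.sin_pi_div_two]; simp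
  · have hcos : 0 < Real.cos x := Real.cos_pos_of_mem_Ioo ⟨by linarith [Real.pi_pos], h1'⟩
    have ht := Real.lt_tan h0' h1'
    rw [Real.tan_eq_sin_div_cos, lt_div_iff₀ hcos] at ht
    linarith

/-- Triangle inequality for the unoriented angle between unit vectors. -/
lemma angle_triangle {u a b : V} (hu : ‖u‖ = 1) (ha : ‖a‖ = 1) (hb : ‖b‖ = 1) :
    angle a b ≤ angle a u + angle u b := by
  set α := angle a u with hαdef
  set β := angle u b with hβdef
  have hα0 : 0 ≤ α := angle_nonneg _ _
  have hαπ : α ≤ Real.pi := angle_le_pi _ _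
  have hβ0 : 0 ≤ β := angle_nonneg _ _
  have hβπ : β ≤ Real.pi := angle_le_pi _ _
  rcases le_or_gt Real.pi (α + β) with h | h
  · exact (angle_le_pi a b).trans h
  have hca : ⟪a, u⟫ = Real.cos α := inner_eq_cos ha hu
  have hcb : ⟪u, b⟫ = Real.cos β := inner_eq_cos hu hb
  have hbu : ⟪b, u⟫ = Real.cos β := by rw [real_inner_comm]; exact hcb
  have huu : ⟪u, u⟫ = 1 := by
    rw [real_inner_self_eq_norm_sq, hu]; norm_num
  set a' := a - ⟪a, u⟫ • u with ha'def
  set b' := b - ⟪b, u⟫ • u with hb'def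
  have hinner : ⟪a', b'⟫ = ⟪a, b⟫ - ⟪a, u⟫ * ⟪b, u⟫ := by
    simp only [ha'def, hb'def, inner_sub_left, inner_sub_right, real_inner_smul_left,
      real_inner_smul_right, huu, real_inner_comm u a, real_inner_comm u b]
    ring
  have hna : ‖a'‖ = Real.sin α := by
    apply sq_eq_of_nonneg (norm_nonneg _)
      (Real.sin_nonneg_of_nonneg_of_le_pi hα0 hαπ)
    have h1 : ‖a'‖ ^ 2 = 1 - ⟪a, u⟫ ^ 2 := by
      rw [ha'def, norm_sub_sq_real, real_inner_smul_right, norm_smul, ha, hu]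
      rw [Real.norm_eq_abs, mul_one, sq_abs]
      ring
    rw [h1, hca]
    nlinarith [Real.sin_sq_add_cos_sq α]
  have hnb : ‖b'‖ = Real.sin β := by
    apply sq_eq_of_nonneg (norm_nonneg _)
      (Real.sin_nonneg_of_nonneg_of_le_pi hβ0 hβπ)
    have h1 : ‖b'‖ ^ 2 = 1 - ⟪b, u⟫ ^ 2 := by
      rw [hb'def, norm_sub_sq_real, real_inner_smul_right, norm_smul, hb, hu]
      rw [Real.norm_eq_abs, mul_one, sq_abs]
      ring
    rw [h1, hbu]
    nlinarith [Real.sin_sq_add_cos_sq β]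
  have hCS : |⟪a', b'⟫| ≤ ‖a'‖ * ‖b'‖ := abs_real_inner_le_norm _ _
  have key : Real.cos (α + β) ≤ ⟪a, b⟫ := by
    rw [Real.cos_add]
    have h1 : -(Real.sin α * Real.sin β) ≤ ⟪a', b'⟫ := by
      rw [← hna, ← hnb]
      exact neg_le_of_abs_le hCS |>.trans_eq rfl
    have := hinner
    rw [hca, hbu] at this
    linarith
  have hab : angle a b = Real.arccos ⟪a, b⟫ := by
    unfold InnerProductGeometry.angle
    rw [ha, hb]; norm_num
  rw [hab]
  calc Real.arccos ⟪a, b⟫ ≤ Real.arccos (Real.cos (α + β)) := by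
        unfold Real.arccos
        have := Real.monotone_arcsin key
        linarith
    _ = α + β := Real.arccos_cos (by linarith) h.le

lemma angle_chain (v : ℕ → V) (hv : ∀ i, ‖v i‖ = 1) (n : ℕ) :
    angle (v 0) (v n) ≤ ∑ i ∈ Finset.range n, angle (v i) (v (i + 1)) := by
  induction n with
  | zero =>
    simp [angle_self (norm_ne_zero_iff.mp (by rw [hv 0]; norm_num))]
  | succ n ih =>
    rw [Finset.sum_range_succ]
    calc angle (v 0) (v (n + 1)) ≤ angle (v 0) (v n) + angle (v n) (v (n + 1)) :=
          angle_triangle (hv n) (hv 0) (hv (n + 1))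
      _ ≤ _ := add_le_add ih le_rfl

lemma step_bound {θ₀ : ℝ} (h0 : 0 < θ₀) (hπ : θ₀ ≤ Real.pi) {u v : V}
    (hu : ‖u‖ = 1) (hv : ‖v‖ = 1) (hd : ‖u - v‖ ≤ 2 * Real.sin (θ₀ / 2)) :
    Real.cos (θ₀ / 2) * angle u v ≤ ‖u - v‖ := by
  set θ := angle u v with hθdef
  have hθ0 : 0 ≤ θ := angle_nonneg _ _
  have hθπ : θ ≤ Real.pi := angle_le_pi _ _
  have hc : ‖u - v‖ = 2 * Real.sin (θ / 2) := norm_sub_unit hu hv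
  have hθθ₀ : θ ≤ θ₀ := by
    by_contra hcon
    push_neg at hcon
    have : Real.sin (θ₀ / 2) < Real.sin (θ / 2) :=
      Real.strictMonoOn_sin ⟨by linarith [Real.pi_pos], by linarith⟩
        ⟨by linarith [Real.pi_pos], by linarith⟩ (by linarith)
    rw [hc] at hd; linarith
  have key : (θ / 2) * Real.cos (θ / 2) ≤ Real.sin (θ / 2) :=
    mul_cos_le_sin (by linarith) (by linarith)
  have hmono : Real.cos (θ₀ / 2) ≤ Real.cos (θ / 2) :=
    Real.cos_le_cos_of_nonneg_of_le_pi (by linarith) (by linarith [Real.pi_pos]) (by linarith)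
  rw [hc]
  nlinarith

/-- Lower bound for the variation of a unit-sphere-valued curve on a subinterval,
in terms of the angle between the endpoint directions. -/
lemma interval_bound {σ : ℝ → V} (hσ : ∀ t, ‖σ t‖ = 1)
    {δ : ℝ} (hδ : 0 < δ) {θ₀ : ℝ} (hθ0 : 0 < θ₀) (hθπ : θ₀ ≤ Real.pi)
    (hUC : ∀ s ∈ Icc (0:ℝ) 1, ∀ t ∈ Icc (0:ℝ) 1,
      dist s t ≤ δ → dist (σ s) (σ t) ≤ 2 * Real.sin (θ₀ / 2))
    {l r : ℝ} (hl : 0 ≤ l) (hlr : l ≤ r) (hr : r ≤ 1) :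
    ENNReal.ofReal (Real.cos (θ₀ / 2) * angle (σ l) (σ r)) ≤ eVariationOn σ (Icc l r) := by
  obtain ⟨m, hm⟩ := exists_nat_ge ((r - l) / δ)
  set n : ℕ := m + 1 with hn
  have hnpos : (0:ℝ) < n := by positivity
  have hmesh : (r - l) / n ≤ δ := by
    rw [div_le_iff₀ hnpos]
    have : (r - l) / δ ≤ (n : ℝ) := by
      have : (m : ℝ) ≤ n := by exact_mod_cast Nat.le_succ m
      linarith
    rw [div_le_iff₀ hδ] at this
    linarith
  set u : ℕ → ℝ := fun i => l + (min i n : ℕ) * ((r - l) / n) with hu_def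
  have hstep : 0 ≤ (r - l) / n := div_nonneg (by linarith) hnpos.le
  have humono : Monotone u := by
    intro i j hij
    have : ((min i n : ℕ) : ℝ) ≤ ((min j n : ℕ) : ℝ) := by
      exact_mod_cast min_le_min hij le_rfl
    simp only [hu_def]
    nlinarith
  have humem : ∀ i, u i ∈ Icc l r := by
    intro i
    constructor
    · simp only [hu_def]
      have : (0:ℝ) ≤ ((min i n : ℕ) : ℝ) := Nat.cast_nonneg _
      nlinarith
    · simp only [hu_def]
      have h1 : ((min i n : ℕ) : ℝ) ≤ (n : ℝ) := by exact_mod_cast min_le_right i n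
      have h2 : ((min i n : ℕ) : ℝ) * ((r - l) / n) ≤ (n : ℝ) * ((r - l) / n) :=
        mul_le_mul_of_nonneg_right h1 hstep
      have h3 : (n : ℝ) * ((r - l) / n) = r - l := by field_simp
      linarith
  have hu0 : u 0 = l := by simp [hu_def]
  have hun : u n = r := by
    simp only [hu_def, min_self]
    field_simp
    ring
  have hclose : ∀ i, dist (u (i + 1)) (u i) ≤ δ := by
    intro i
    have h1 : ((min (i+1) n : ℕ) : ℝ) - ((min i n : ℕ) : ℝ) ≤ 1 := by
      have : min (i+1) n ≤ min i n + 1 := by omega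
      have := (Nat.cast_le (α := ℝ)).2 this
      push_cast at this ⊢
      linarith
    have h0 : ((min i n : ℕ) : ℝ) ≤ ((min (i+1) n : ℕ) : ℝ) := by
      exact_mod_cast min_le_min (Nat.le_succ i) le_rfl
    rw [Real.dist_eq]
    simp only [hu_def]
    rw [abs_of_nonneg (by nlinarith)]
    calc l + ((min (i+1) n : ℕ) : ℝ) * ((r - l) / n) - (l + ((min i n : ℕ) : ℝ) * ((r - l) / n))
        = (((min (i+1) n : ℕ) : ℝ) - ((min i n : ℕ) : ℝ)) * ((r - l) / n) := by ring
      _ ≤ 1 * ((r - l) / n) := mul_le_mul_of_nonneg_right h1 hstep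
      _ ≤ δ := by rw [one_mul]; exact hmesh
  have hsub : Icc l r ⊆ Icc (0:ℝ) 1 := Icc_subset_Icc hl hr
  have hchord : ∀ i, ‖σ (u i) - σ (u (i + 1))‖ ≤ 2 * Real.sin (θ₀ / 2) := by
    intro i
    have := hUC (u i) (hsub (humem i)) (u (i + 1)) (hsub (humem (i + 1)))
      (by rw [dist_comm]; exact hclose i)
    rwa [dist_eq_norm] at this
  have hangle_step : ∀ i, Real.cos (θ₀ / 2) * angle (σ (u i)) (σ (u (i + 1)))
      ≤ dist (σ (u (i + 1))) (σ (u i)) := by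
    intro i
    rw [dist_comm, dist_eq_norm]
    exact step_bound hθ0 hθπ (hσ _) (hσ _) (hchord i)
  have hchain : angle (σ l) (σ r) ≤
      ∑ i ∈ Finset.range n, angle (σ (u i)) (σ (u (i + 1))) := by
    have := angle_chain (fun i => σ (u i)) (fun i => hσ (u i)) n
    rwa [hu0, hun] at this
  have hsum : Real.cos (θ₀ / 2) * angle (σ l) (σ r) ≤
      ∑ i ∈ Finset.range n, dist (σ (u (i + 1))) (σ (u i)) := by
    have hκ0 : 0 ≤ Real.cos (θ₀ / 2) := by
      apply Real.cos_nonneg_of_mem_Icc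
      constructor <;> [linarith [Real.pi_pos]; linarith]
    calc Real.cos (θ₀ / 2) * angle (σ l) (σ r)
        ≤ Real.cos (θ₀ / 2) * ∑ i ∈ Finset.range n, angle (σ (u i)) (σ (u (i + 1))) :=
          mul_le_mul_of_nonneg_left hchain hκ0
      _ = ∑ i ∈ Finset.range n, Real.cos (θ₀ / 2) * angle (σ (u i)) (σ (u (i + 1))) :=
          Finset.mul_sum _ _ _
      _ ≤ ∑ i ∈ Finset.range n, dist (σ (u (i + 1))) (σ (u i)) :=
          Finset.sum_le_sum fun i _ => hangle_step i
  calc ENNReal.ofReal (Real.cos (θ₀ / 2) * angle (σ l) (σ r))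
      ≤ ENNReal.ofReal (∑ i ∈ Finset.range n, dist (σ (u (i + 1))) (σ (u i))) :=
        ENNReal.ofReal_le_ofReal hsum
    _ = ∑ i ∈ Finset.range n, ENNReal.ofReal (dist (σ (u (i + 1))) (σ (u i))) :=
        ENNReal.ofReal_sum_of_nonneg fun i _ => dist_nonneg
    _ = ∑ i ∈ Finset.range n, edist (σ (u (i + 1))) (σ (u i)) := by
        simp [edist_dist]
    _ ≤ eVariationOn σ (Icc l r) := eVariationOn.sum_le (f := σ) (n := n) humono humem

lemma smul_proj {w : V} {c : ℝ} (hc : 0 < c) :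
    ‖c • w‖⁻¹ • (c • w) = ‖w‖⁻¹ • w := by
  rcases eq_or_ne w 0 with rfl | hw
  · simp
  rw [norm_smul, Real.norm_eq_abs, abs_of_pos hc, smul_smul, mul_inv]
  congr 1
  rw [mul_comm c⁻¹, mul_assoc, inv_mul_cancel₀ hc.ne', mul_one]

lemma main_aux {σ : ℝ → V} (hσc : Continuous σ) (hσ : ∀ t, ‖σ t‖ = 1)
    (hσ01 : σ 1 = σ 0) {a b : ℝ} (ha : a ∈ Icc (0:ℝ) 1) (hb : b ∈ Icc (0:ℝ) 1)
    (hab : a ≤ b) (hanti : σ a = - σ b) :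
    ENNReal.ofReal (2 * Real.pi) ≤ eVariationOn σ (Icc 0 1) := by
  have hσbne : σ b ≠ 0 := fun h => by simpa [h] using hσ b
  have hangle_ab : angle (σ a) (σ b) = Real.pi := by
    rw [hanti]; exact angle_neg_self_of_nonzero hσbne
  have hangle_ba : angle (σ b) (σ a) = Real.pi := by
    rw [angle_comm]; exact hangle_ab
  -- step 1: for every k, a lower bound with factor cos (θ₀/2)
  have key : ∀ k : ℕ, ENNReal.ofReal (Real.cos (1 / (2 * ((k:ℝ) + 1))) * (2 * Real.pi))
      ≤ eVariationOn σ (Icc 0 1) := by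
    intro k
    set θ₀ : ℝ := 1 / ((k:ℝ) + 1) with hθ₀def
    have hθ0 : 0 < θ₀ := by positivity
    have hθ1 : θ₀ ≤ 1 := by
      rw [hθ₀def, div_le_one (by positivity)]
      linarith [Nat.cast_nonneg (α := ℝ) k]
    have hθπ : θ₀ ≤ Real.pi := hθ1.trans (by linarith [Real.two_le_pi])
    have hc₀pos : 0 < 2 * Real.sin (θ₀ / 2) := by
      have : 0 < Real.sin (θ₀ / 2) :=
        Real.sin_pos_of_pos_of_lt_pi (by linarith) (by linarith [Real.pi_gt_three])
      linarith
    -- uniform continuity on [0,1]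
    obtain ⟨δ, hδpos, hδ⟩ := Metric.uniformContinuousOn_iff_le.1
      (isCompact_Icc.uniformContinuousOn_of_continuous hσc.continuousOn)
      (2 * Real.sin (θ₀ / 2)) hc₀pos
    have hUC : ∀ s ∈ Icc (0:ℝ) 1, ∀ t ∈ Icc (0:ℝ) 1,
        dist s t ≤ δ → dist (σ s) (σ t) ≤ 2 * Real.sin (θ₀ / 2) := fun s hs t ht h =>
      hδ s hs t ht h
    have h0a := interval_bound hσ hδpos hθ0 hθπ hUC (le_refl (0:ℝ)) ha.1 ha.2
    have hab' := interval_bound hσ hδpos hθ0 hθπ hUC ha.1 hab hb.2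
    have hb1 := interval_bound hσ hδpos hθ0 hθπ hUC (ha.1.trans hab) hb.2 (le_refl (1:ℝ))
    set κ := Real.cos (θ₀ / 2) with hκdef
    have hκ0 : 0 ≤ κ := by
      apply Real.cos_nonneg_of_mem_Icc
      constructor
      · linarith [Real.pi_pos]
      · linarith [Real.two_le_pi]
    -- triangle inequality through σ 1 = σ 0
    have htri : Real.pi ≤ angle (σ 0) (σ a) + angle (σ b) (σ 0) := by
      have h1 : angle (σ b) (σ a) ≤ angle (σ b) (σ 0) + angle (σ 0) (σ a) :=
        hσ01 ▸ angle_triangle (hσ 1) (hσ b) (hσ a)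
      rw [hangle_ba] at h1
      linarith
    -- additivity of variation
    have i1 : Icc (0:ℝ) 1 ∩ Icc 0 a = Icc 0 a :=
      inter_eq_self_of_subset_right (Icc_subset_Icc le_rfl ha.2)
    have i2 : Icc (0:ℝ) 1 ∩ Icc a b = Icc a b :=
      inter_eq_self_of_subset_right (Icc_subset_Icc ha.1 hb.2)
    have i3 : Icc (0:ℝ) 1 ∩ Icc b 1 = Icc b 1 :=
      inter_eq_self_of_subset_right (Icc_subset_Icc hb.1 le_rfl)
    have i4 : Icc (0:ℝ) 1 ∩ Icc 0 b = Icc 0 b :=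
      inter_eq_self_of_subset_right (Icc_subset_Icc le_rfl hb.2)
    have e1 := eVariationOn.Icc_add_Icc σ (s := Icc (0:ℝ) 1) ha.1 hab ha
    have e2 := eVariationOn.Icc_add_Icc σ (s := Icc (0:ℝ) 1) (ha.1.trans hab) hb.2 hb
    rw [i1, i2, i4] at e1
    rw [i4, i3, inter_self] at e2
    have hadd : eVariationOn σ (Icc 0 a) + eVariationOn σ (Icc a b) + eVariationOn σ (Icc b 1)
        = eVariationOn σ (Icc 0 1) := by rw [e1, e2]
    have hA1 : 0 ≤ angle (σ 0) (σ a) := angle_nonneg _ _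
    have hA2 : 0 ≤ angle (σ b) (σ 0) := angle_nonneg _ _
    rw [hangle_ab] at hab'
    rw [hσ01] at hb1
    have hsum3 : ENNReal.ofReal (κ * angle (σ 0) (σ a)) + ENNReal.ofReal (κ * Real.pi)
        + ENNReal.ofReal (κ * angle (σ b) (σ 0)) ≤ eVariationOn σ (Icc 0 1) := by
      rw [← hadd]
      exact add_le_add (add_le_add h0a hab') hb1
    have harg : Real.cos (1 / (2 * ((k:ℝ) + 1))) = κ := by
      rw [hκdef, hθ₀def]
      congr 1
      field_simp
    rw [harg]
    calc ENNReal.ofReal (κ * (2 * Real.pi))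
        ≤ ENNReal.ofReal (κ * angle (σ 0) (σ a) + κ * Real.pi + κ * angle (σ b) (σ 0)) := by
          apply ENNReal.ofReal_le_ofReal; nlinarith
      _ = ENNReal.ofReal (κ * angle (σ 0) (σ a)) + ENNReal.ofReal (κ * Real.pi)
          + ENNReal.ofReal (κ * angle (σ b) (σ 0)) := by
          rw [ENNReal.ofReal_add (by nlinarith [Real.pi_pos] : (0:ℝ) ≤ κ * angle (σ 0) (σ a) + κ * Real.pi)
              (mul_nonneg hκ0 hA2),
            ENNReal.ofReal_add (mul_nonneg hκ0 hA1)
              (mul_nonneg hκ0 Real.pi_pos.le)]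
      _ ≤ _ := hsum3
  -- step 2: pass to the limit k → ∞
  have htend : Tendsto (fun k : ℕ => ENNReal.ofReal
      (Real.cos (1 / (2 * ((k:ℝ) + 1))) * (2 * Real.pi))) atTop
      (nhds (ENNReal.ofReal (2 * Real.pi))) := by
    have h1 : Tendsto (fun k : ℕ => 1 / (2 * ((k:ℝ) + 1))) atTop (nhds 0) := by
      have := tendsto_one_div_add_atTop_nhds_zero_nat (𝕜 := ℝ)
      have h2 : (fun k : ℕ => 1 / (2 * ((k:ℝ) + 1)))
          = fun k : ℕ => (1/2) * (1 / ((k:ℝ) + 1)) := by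
        funext k; field_simp
      rw [h2]
      simpa using this.const_mul (1/2 : ℝ)
    have h2 : Tendsto (fun k : ℕ => Real.cos (1 / (2 * ((k:ℝ) + 1)))) atTop (nhds 1) := by
      have := (Real.continuous_cos.tendsto 0).comp h1
      simpa [Function.comp_def] using this
    have h3 : Tendsto (fun k : ℕ => Real.cos (1 / (2 * ((k:ℝ) + 1))) * (2 * Real.pi)) atTop
        (nhds (2 * Real.pi)) := by
      simpa using h2.mul_const (2 * Real.pi)
    exact (ENNReal.continuous_ofReal.tendsto _).comp h3
  exact le_of_tendsto htend (Filter.Eventually.of_forall key)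

end Stmt8

open Stmt8

/-- Let `γ` be a closed rectifiable curve in ℝ³ and `p` a point
on a chord of `γ` (the segment between two points `x, y` of the curve) with `p`
not on the curve itself.  Then the cone angle of the curve at `p` is at least
`2π`. -/
theorem statement_8 (γ : ℝ → E3) (hcont : Continuous γ)
    (hper : Function.Periodic γ 1)
    (hrect : eVariationOn γ (Icc 0 1) < ⊤)
    (x y : E3) (hx : x ∈ range γ) (hy : y ∈ range γ)
    (p : E3) (hp : p ∈ segment ℝ x y) (hpK : p ∉ range γ) :
    ENNReal.ofReal (2 * Real.pi) ≤ coneAngle γ p := by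
  have hne : ∀ t, γ t ≠ p := fun t h => hpK (h ▸ mem_range_self t)
  rw [coneAngle]
  set σ : ℝ → E3 := fun t => sphProj p (γ t) with hσdef
  have hσ : ∀ t, ‖σ t‖ = 1 := by
    intro t
    have h0 : ‖γ t - p‖ ≠ 0 := norm_ne_zero_iff.2 (sub_ne_zero.2 (hne t))
    simp only [hσdef, sphProj, norm_smul, Real.norm_eq_abs, abs_inv, abs_norm]
    field_simp
  have hσc : Continuous σ := by
    refine Continuous.smul (f := fun t => ‖γ t - p‖⁻¹) (g := fun t => γ t - p) ?_ ?_
    · exact ((hcont.sub continuous_const).norm).inv₀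
        (fun t => norm_ne_zero_iff.2 (sub_ne_zero.2 (hne t)))
    · exact hcont.sub continuous_const
  have hσ01 : σ 1 = σ 0 := by
    have : γ 1 = γ 0 := by simpa using hper 0
    simp [hσdef, sphProj, this]
  obtain ⟨s, hs⟩ := hx
  obtain ⟨s', hs'⟩ := hy
  set a := Int.fract s with hadef
  set b := Int.fract s' with hbdef
  have hga : γ a = x := by
    rw [hadef, Int.fract]
    rw [show s - (⌊s⌋ : ℝ) = s - (⌊s⌋ : ℝ) * 1 by ring, hper.sub_int_mul_eq]
    exact hs
  have hgb : γ b = y := by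
    rw [hbdef, Int.fract]
    rw [show s' - (⌊s'⌋ : ℝ) = s' - (⌊s'⌋ : ℝ) * 1 by ring, hper.sub_int_mul_eq]
    exact hs'
  have haI : a ∈ Icc (0:ℝ) 1 := ⟨Int.fract_nonneg s, (Int.fract_lt_one s).le⟩
  have hbI : b ∈ Icc (0:ℝ) 1 := ⟨Int.fract_nonneg s', (Int.fract_lt_one s').le⟩
  have hxp : x ≠ p := hga ▸ hne a
  have hyp : y ≠ p := hgb ▸ hne b
  obtain ⟨t1, t2, ht1, ht2, hsum, hP⟩ := hp
  have hxy : x ≠ y := by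
    rintro rfl
    apply hxp
    rw [← hP, ← add_smul, hsum, one_smul]
  have ht2' : 0 < t2 := by
    rcases ht2.lt_or_eq with h | h
    · exact h
    · exfalso; apply hxp
      rw [← hP, ← h, zero_smul, add_zero, show t1 = 1 by linarith, one_smul]
  have ht1' : 0 < t1 := by
    rcases ht1.lt_or_eq with h | h
    · exact h
    · exfalso; apply hyp
      rw [← hP, ← h, zero_smul, zero_add, show t2 = 1 by linarith, one_smul]
  set w : E3 := x - y with hwdef
  have hxp' : x - p = t2 • w := by
    rw [← hP, hwdef, show t1 = 1 - t2 by linarith]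
    module
  have hyp' : y - p = t1 • (-w) := by
    rw [← hP, hwdef, show t2 = 1 - t1 by linarith]
    module
  have projx : sphProj p x = ‖w‖⁻¹ • w := by
    rw [sphProj, hxp', smul_proj ht2']
  have projy : sphProj p y = -(‖w‖⁻¹ • w) := by
    rw [sphProj, hyp', smul_proj ht1', norm_neg, smul_neg]
  have hσa : σ a = ‖w‖⁻¹ • w := by rw [hσdef]; simp only; rw [hga, projx]
  have hσb : σ b = -(‖w‖⁻¹ • w) := by rw [hσdef]; simp only; rw [hgb, projy]
  rcases le_total a b with h | h
  · exact main_aux hσc hσ hσ01 haI hbI h (by rw [hσa, hσb, neg_neg])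
  · exact main_aux hσc hσ hσ01 hbI haI h (by rw [hσa, hσb])
end
end

section
/- Let K be a closed C^{1,1} curve in ℝ³ of unit thickness (thickness at least 1), and let Wr(K) be its writhe, given by the Gauss integral Wr(K) = (1/4π) ∮_K ∮_K det(K'(s), K'(t), K(s)−K(t)) / |K(s)−K(t)|³ ds dt. Then Len(K) ≥ 2π·√|Wr(K)|. -/
open Set Metric Filter
open scoped ENNReal NNReal

noncomputable section

/-- The determinant of three vectors of ℝ³ (the scalar triple product). -/
def det3 (u v w : E3) : ℝ :=
  u 0 * (v 1 * w 2 - v 2 * w 1) - u 1 * (v 0 * w 2 - v 2 * w 0) +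
    u 2 * (v 0 * w 1 - v 1 * w 0)


open scoped RealInnerProductSpace Topology

/-- The cross product on ℝ³. -/
def cross3 (u v : E3) : E3 :=
  WithLp.toLp 2 ![u 1 * v 2 - u 2 * v 1, u 2 * v 0 - u 0 * v 2, u 0 * v 1 - u 1 * v 0]

lemma inner_E3 (u v : E3) : ⟪u, v⟫ = u 0 * v 0 + u 1 * v 1 + u 2 * v 2 := by
  simp [PiLp.inner_apply, RCLike.inner_apply, Fin.sum_univ_three]
  ring

lemma lagrange (u v : E3) : ‖cross3 u v‖ ^ 2 = ‖u‖ ^ 2 * ‖v‖ ^ 2 - ⟪u, v⟫ ^ 2 := by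
  rw [← real_inner_self_eq_norm_sq, ← real_inner_self_eq_norm_sq, ← real_inner_self_eq_norm_sq]
  simp only [inner_E3, cross3]
  simp only [Matrix.cons_val_zero, Matrix.cons_val_one, Matrix.head_cons,
    Matrix.cons_val_two, Matrix.tail_cons]
  ring

lemma triple_identity (u v w : E3) :
    cross3 (cross3 u w) (cross3 v w) = det3 u v w • w := by
  ext i
  fin_cases i <;>
    simp [cross3, det3, PiLp.smul_apply, smul_eq_mul] <;> ring

lemma cross3_norm_le (u v : E3) : ‖cross3 u v‖ ≤ ‖u‖ * ‖v‖ := by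
  have h := lagrange u v
  refine le_of_pow_le_pow_left₀ two_ne_zero (by positivity) ?_
  rw [h]; nlinarith [sq_nonneg (⟪u, v⟫ : ℝ)]

lemma det3_mul_norm_le (u v w : E3) :
    |det3 u v w| * ‖w‖ ≤ ‖cross3 u w‖ * ‖cross3 v w‖ := by
  have h := congrArg norm (triple_identity u v w)
  rw [norm_smul, Real.norm_eq_abs] at h
  calc |det3 u v w| * ‖w‖ = ‖cross3 (cross3 u w) (cross3 v w)‖ := h.symm
    _ ≤ _ := cross3_norm_le _ _

lemma cross3_neg_right (u v : E3) : cross3 u (-v) = -cross3 u v := by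
  ext i; fin_cases i <;> simp [cross3] <;> ring

lemma norm_comb_sq {F : Type*} [NormedAddCommGroup F] [InnerProductSpace ℝ F]
    (a b : ℝ) (u v : F) :
    ‖a • u + b • v‖^2 = a^2 * ‖u‖^2 + 2*a*b*⟪u, v⟫ + b^2 * ‖v‖^2 := by
  rw [norm_add_sq_real, norm_smul, norm_smul, real_inner_smul_left, real_inner_smul_right,
    Real.norm_eq_abs, Real.norm_eq_abs, mul_pow, mul_pow, sq_abs, sq_abs]
  ring

/-- Explicit construction of the circumcenter of the triangle `x, x+u, x+v`,
together with the value of the circumradius. -/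
lemma circum_construct {F : Type*} [NormedAddCommGroup F] [InnerProductSpace ℝ F]
    (x u v : F) (hD : 0 < ‖u‖^2 * ‖v‖^2 - ⟪u, v⟫^2) :
    ∃ c : F, dist c x = dist c (x + u) ∧ dist c x = dist c (x + v) ∧
      (dist c x)^2 = ‖u‖^2 * ‖v‖^2 * ‖u - v‖^2 /
        (4 * (‖u‖^2 * ‖v‖^2 - ⟪u, v⟫^2)) := by
  have hDne : ‖u‖^2 * ‖v‖^2 - ⟪u, v⟫^2 ≠ 0 := ne_of_gt hD
  set a : ℝ := ‖v‖^2 * (‖u‖^2 - ⟪u, v⟫) / (2 * (‖u‖^2 * ‖v‖^2 - ⟪u, v⟫^2)) with ha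
  set b : ℝ := ‖u‖^2 * (‖v‖^2 - ⟪u, v⟫) / (2 * (‖u‖^2 * ‖v‖^2 - ⟪u, v⟫^2)) with hb
  have key1 : a * ‖u‖^2 + b * ⟪u, v⟫ = ‖u‖^2 / 2 := by
    rw [ha, hb, div_mul_eq_mul_div, div_mul_eq_mul_div, ← add_div,
      div_eq_div_iff (mul_ne_zero two_ne_zero hDne) two_ne_zero]; ring
  have key2 : a * ⟪u, v⟫ + b * ‖v‖^2 = ‖v‖^2 / 2 := by
    rw [ha, hb, div_mul_eq_mul_div, div_mul_eq_mul_div, ← add_div,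
      div_eq_div_iff (mul_ne_zero two_ne_zero hDne) two_ne_zero]; ring
  have h1 : x + (a • u + b • v) - x = a • u + b • v := by abel
  refine ⟨x + (a • u + b • v), ?_, ?_, ?_⟩
  · rw [dist_eq_norm, dist_eq_norm, h1]
    have h2 : x + (a • u + b • v) - (x + u) = (a - 1) • u + b • v := by
      rw [sub_smul, one_smul]; abel
    rw [h2]
    refine (pow_left_inj₀ (norm_nonneg _) (norm_nonneg _) two_ne_zero).mp ?_
    rw [norm_comb_sq, norm_comb_sq]
    nlinarith [key1]
  · rw [dist_eq_norm, dist_eq_norm, h1]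
    have h2 : x + (a • u + b • v) - (x + v) = a • u + (b - 1) • v := by
      rw [sub_smul, one_smul]; abel
    rw [h2]
    refine (pow_left_inj₀ (norm_nonneg _) (norm_nonneg _) two_ne_zero).mp ?_
    rw [norm_comb_sq, norm_comb_sq]
    nlinarith [key2]
  · rw [dist_eq_norm, h1, norm_comb_sq]
    have euv : ‖u - v‖^2 = ‖u‖^2 + ‖v‖^2 - 2*⟪u, v⟫ := by
      rw [norm_sub_sq_real]; ring
    rw [euv, ha, hb]
    rw [eq_div_iff (mul_ne_zero four_ne_zero hDne)]
    simp only [div_mul_eq_div_div]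
    have hinv := mul_inv_cancel₀ hDne
    linear_combination (‖u‖^2*‖v‖^2*(‖u‖^2+‖v‖^2-2*⟪u,v⟫) *
      ((‖u‖^2*‖v‖^2-⟪u,v⟫^2) * (‖u‖^2*‖v‖^2-⟪u,v⟫^2)⁻¹ + 1)) * hinv
lemma thickness_le_circumradius3 {A : Set E3} {x y z : E3} (hx : x ∈ A) (hy : y ∈ A)
    (hz : z ∈ A) (hxy : x ≠ y) (hyz : y ≠ z) (hxz : x ≠ z) :
    thickness A ≤ circumradius3 x y z := by
  refine iInf_le_of_le x (iInf_le_of_le hx (iInf_le_of_le y (iInf_le_of_le hy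
    (iInf_le_of_le z (iInf_le_of_le hz ?_)))))
  exact iInf_le_of_le hxy (iInf_le_of_le hyz (iInf_le _ hxz))

set_option maxHeartbeats 1000000 in
lemma key_bound (γ : ℝ → E3) (hdiff : Differentiable ℝ γ)
    (hspeed : ∀ t, ‖deriv γ t‖ = 1) (hthick : 1 ≤ thickness (range γ)) (s t : ℝ) :
    ‖cross3 (deriv γ s) (γ t - γ s)‖ ^ 2 ≤ ‖γ t - γ s‖ ^ 4 / 4 := by
  by_contra hcon
  push_neg at hcon
  set T := deriv γ s with hTdef
  set v : E3 := γ t - γ s with hvdef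
  set S := ‖cross3 T v‖ ^ 2 with hSdef
  have hS0 : 0 < S := lt_of_le_of_lt (by positivity) hcon
  -- derivative of ε ↦ γ (s + ε) at 0
  have hT : HasDerivAt γ T s := (hdiff s).hasDerivAt
  have hf : HasDerivAt (fun ε : ℝ => s + ε) 1 0 := by
    simpa using (hasDerivAt_id (0:ℝ)).const_add s
  have hT' : HasDerivAt γ T (s + 0) := by simpa using hT
  have hφ : HasDerivAt (fun ε : ℝ => γ (s + ε)) T 0 := by
    have h := hT'.scomp (0:ℝ) hf
    simpa [Function.comp_def] using h
  set w : ℝ → E3 := fun ε => ε⁻¹ • (γ (s + ε) - γ s) with hwdef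
  have hslope : Tendsto w (𝓝[>] (0:ℝ)) (𝓝 T) := by
    have h := hasDerivAt_iff_tendsto_slope.mp hφ
    have h2 := h.mono_left (nhdsWithin_mono 0 (fun x hx => ne_of_gt hx))
    refine (h2.congr fun ε => ?_)
    simp [slope_def_module, hwdef]
  have hu : Tendsto (fun ε : ℝ => γ (s + ε) - γ s) (𝓝[>] (0:ℝ)) (𝓝 0) := by
    have hc : Continuous fun ε : ℝ => γ (s + ε) - γ s :=
      (hdiff.continuous.comp (continuous_const.add continuous_id)).sub continuous_const
    have := (hc.tendsto 0).mono_left (nhdsWithin_le_nhds (s := Ioi (0:ℝ)))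
    simpa using this
  set g : ℝ → ℝ := fun ε => ‖w ε‖^2 * ‖v‖^2 - ⟪w ε, v⟫^2 with hgdef
  have hg : Tendsto g (𝓝[>] (0:ℝ)) (𝓝 S) := by
    have h1 : Tendsto (fun ε => ‖w ε‖^2 * ‖v‖^2) (𝓝[>] (0:ℝ)) (𝓝 (‖T‖^2 * ‖v‖^2)) :=
      (hslope.norm.pow 2).mul tendsto_const_nhds
    have h2 : Tendsto (fun ε => ⟪w ε, v⟫^2) (𝓝[>] (0:ℝ)) (𝓝 (⟪T, v⟫^2)) :=
      (hslope.inner tendsto_const_nhds).pow 2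
    have h3 := h1.sub h2
    have : ‖T‖^2 * ‖v‖^2 - ⟪T, v⟫^2 = S := (lagrange T v).symm
    rwa [this] at h3
  set r2 : ℝ → ℝ := fun ε =>
    ‖w ε‖^2 * ‖v‖^2 * ‖(γ (s + ε) - γ s) - v‖^2 / (4 * g ε) with hr2def
  have hr2 : Tendsto r2 (𝓝[>] (0:ℝ)) (𝓝 (‖T‖^2 * ‖v‖^2 * ‖(0:E3) - v‖^2 / (4 * S))) := by
    refine Tendsto.div ?_ (hg.const_mul 4) (by positivity)
    exact ((hslope.norm.pow 2).mul tendsto_const_nhds).mul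
      ((hu.sub tendsto_const_nhds).norm.pow 2)
  have hlim_lt : ‖T‖^2 * ‖v‖^2 * ‖(0:E3) - v‖^2 / (4 * S) < 1 := by
    rw [zero_sub, norm_neg, hspeed s]
    rw [div_lt_one (by positivity)]
    nlinarith [hcon]
  have E1 : ∀ᶠ ε in 𝓝[>] (0:ℝ), 0 < g ε := hg.eventually (eventually_gt_nhds hS0)
  have E2 : ∀ᶠ ε in 𝓝[>] (0:ℝ), r2 ε < 1 := hr2.eventually (eventually_lt_nhds hlim_lt)
  have E3' : ∀ᶠ ε in 𝓝[>] (0:ℝ), (0:ℝ) < ε := eventually_mem_nhdsWithin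
  obtain ⟨ε, hgε, hr2ε, hεpos⟩ := (E1.and (E2.and E3')).exists
  have hεne : ε ≠ 0 := ne_of_gt hεpos
  set u : E3 := γ (s + ε) - γ s with hudef
  have hwε : w ε = ε⁻¹ • u := rfl
  have hwn : ‖w ε‖^2 = ε⁻¹^2 * ‖u‖^2 := by
    rw [hwε, norm_smul, Real.norm_eq_abs, mul_pow, sq_abs]
  have hwi : ⟪w ε, v⟫ = ε⁻¹ * ⟪u, v⟫ := by
    rw [hwε, real_inner_smul_left]
  have hgval : g ε = ε⁻¹^2 * (‖u‖^2 * ‖v‖^2 - ⟪u, v⟫^2) := by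
    simp only [hgdef, hwn, hwi]; ring
  have hDpos : 0 < ‖u‖^2 * ‖v‖^2 - ⟪u, v⟫^2 := by
    have hε2 : 0 < ε⁻¹^2 := by positivity
    rw [hgval] at hgε
    rcases mul_pos_iff.mp hgε with ⟨_, h⟩ | ⟨h1, _⟩
    · exact h
    · exact absurd h1 (not_lt.mpr hε2.le)
  obtain ⟨c, hc1, hc2, hc3⟩ := circum_construct (γ s) u v hDpos
  have hxu : γ s + u = γ (s + ε) := by rw [hudef]; abel
  have hxv : γ s + v = γ t := by rw [hvdef]; abel
  rw [hxu] at hc1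
  rw [hxv] at hc2
  -- distinctness
  have hune : u ≠ 0 := by
    intro h
    rw [h, norm_zero, inner_zero_left] at hDpos
    norm_num at hDpos
  have hvne : v ≠ 0 := by
    intro h
    rw [h, norm_zero, inner_zero_right] at hDpos
    norm_num at hDpos
  have huv : u ≠ v := by
    intro h
    rw [h, real_inner_self_eq_norm_sq] at hDpos
    nlinarith [hDpos]
  have hp1 : γ s ≠ γ (s + ε) := fun h => hune (by rw [hudef, ← h, sub_self])
  have hp2 : γ (s + ε) ≠ γ t := fun h => huv (by rw [hudef, hvdef, h])
  have hp3 : γ s ≠ γ t := fun h => hvne (by rw [hvdef, ← h, sub_self])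
  -- thickness gives circumradius ≥ 1
  have hth : (1:ℝ≥0∞) ≤ circumradius3 (γ s) (γ (s+ε)) (γ t) :=
    le_trans hthick (thickness_le_circumradius3 ⟨s, rfl⟩ ⟨s+ε, rfl⟩ ⟨t, rfl⟩ hp1 hp2 hp3)
  have hmem : ENNReal.ofReal (dist c (γ s)) ∈ {r : ℝ≥0∞ | ∃ c' : E3,
      edist c' (γ s) = r ∧ edist c' (γ (s+ε)) = r ∧ edist c' (γ t) = r} :=
    ⟨c, by rw [edist_dist], by rw [edist_dist, ← hc1], by rw [edist_dist, ← hc2]⟩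
  have hle : circumradius3 (γ s) (γ (s+ε)) (γ t) ≤ ENNReal.ofReal (dist c (γ s)) :=
    sInf_le hmem
  have h1R : (1:ℝ) ≤ dist c (γ s) := ENNReal.one_le_ofReal.mp (le_trans hth hle)
  have hDne : ‖u‖^2 * ‖v‖^2 - ⟪u, v⟫^2 ≠ 0 := ne_of_gt hDpos
  have hrval : r2 ε = ‖u‖^2 * ‖v‖^2 * ‖u - v‖^2 / (4 * (‖u‖^2 * ‖v‖^2 - ⟪u, v⟫^2)) := by
    show ‖w ε‖^2 * ‖v‖^2 * ‖γ (s + ε) - γ s - v‖^2 / (4 * g ε) = _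
    rw [hwn, hgval, ← hudef]
    have h4 : ε⁻¹^2 ≠ 0 := by positivity
    field_simp
  nlinarith [hr2ε, h1R, hrval, hc3]

lemma sq_le_of_sq (x q : ℝ) (hx : 0 ≤ x) (hq : 0 ≤ q) (h : x^2 ≤ q^2) : x ≤ q :=
  le_of_pow_le_pow_left₀ two_ne_zero hq h

lemma det3_zero_right (u v : E3) : det3 u v 0 = 0 := by
  have h0 : ∀ i : Fin 3, (0 : E3) i = 0 := fun _ => rfl
  simp [det3, h0]

lemma G_bound (γ : ℝ → E3) (hdiff : Differentiable ℝ γ)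
    (hspeed : ∀ t, ‖deriv γ t‖ = 1) (hthick : 1 ≤ thickness (range γ)) (s t : ℝ) :
    |det3 (deriv γ s) (deriv γ t) (γ s - γ t) / ‖γ s - γ t‖ ^ 3| ≤ 1 / 4 := by
  rcases eq_or_ne (γ s) (γ t) with heq | hne
  · rw [heq, sub_self, det3_zero_right]
    norm_num
  · set wv : E3 := γ s - γ t with hwv
    have hd : 0 < ‖wv‖ := norm_pos_iff.mpr (sub_ne_zero.mpr hne)
    -- bound on ‖cross3 (deriv γ s) wv‖
    have hb1 : ‖cross3 (deriv γ s) wv‖ ≤ ‖wv‖^2 / 2 := by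
      have h := key_bound γ hdiff hspeed hthick s t
      have hflip : cross3 (deriv γ s) (γ t - γ s) = - cross3 (deriv γ s) wv := by
        rw [← cross3_neg_right]; congr 1; rw [hwv]; abel
      rw [hflip, norm_neg] at h
      have hns : ‖γ t - γ s‖ = ‖wv‖ := by rw [hwv, norm_sub_rev]
      rw [hns] at h
      refine sq_le_of_sq _ _ (norm_nonneg _) (by positivity) ?_
      rw [div_pow]; nlinarith [h]
    have hb2 : ‖cross3 (deriv γ t) wv‖ ≤ ‖wv‖^2 / 2 := by
      have h := key_bound γ hdiff hspeed hthick t s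
      rw [← hwv] at h
      refine sq_le_of_sq _ _ (norm_nonneg _) (by positivity) ?_
      rw [div_pow]; nlinarith [h]
    have hdet : |det3 (deriv γ s) (deriv γ t) wv| * ‖wv‖ ≤ ‖wv‖^2/2 * (‖wv‖^2/2) := by
      calc |det3 (deriv γ s) (deriv γ t) wv| * ‖wv‖
          ≤ ‖cross3 (deriv γ s) wv‖ * ‖cross3 (deriv γ t) wv‖ := det3_mul_norm_le _ _ _
        _ ≤ ‖wv‖^2/2 * (‖wv‖^2/2) := by
            exact mul_le_mul hb1 hb2 (norm_nonneg _) (by positivity)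
    have hdet' : |det3 (deriv γ s) (deriv γ t) wv| ≤ ‖wv‖^3 / 4 := by
      rw [← mul_le_mul_iff_left₀ hd]
      calc |det3 (deriv γ s) (deriv γ t) wv| * ‖wv‖ ≤ ‖wv‖^2/2 * (‖wv‖^2/2) := hdet
        _ = ‖wv‖^3/4 * ‖wv‖ := by ring
    rw [abs_div, abs_of_nonneg (by positivity : (0:ℝ) ≤ ‖wv‖^3)]
    rw [div_le_iff₀ (by positivity)]
    calc |det3 (deriv γ s) (deriv γ t) wv| ≤ ‖wv‖^3/4 := hdet'
      _ = 1/4 * ‖wv‖^3 := by ring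

/-- Let `γ` be a closed simple `C^{1,1}` curve of unit
thickness in ℝ³, parametrized by arclength with period `L` (its length), and
let `Wr` be its writhe, given by the Gauss double integral.  Then
`L = Len(γ) ≥ 2π √|Wr|`. -/
theorem statement_13 (γ : ℝ → E3) (L : ℝ) (hL : 0 < L)
    (hper : Function.Periodic γ L)
    (hdiff : Differentiable ℝ γ)
    (hspeed : ∀ t, ‖deriv γ t‖ = 1)
    (hlip : ∃ C : ℝ≥0, LipschitzWith C (deriv γ))
    (hinj : ∀ s ∈ Ico 0 L, ∀ t ∈ Ico 0 L, γ s = γ t → s = t)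
    (hthick : 1 ≤ thickness (range γ)) :
    2 * Real.pi * Real.sqrt
        |(1 / (4 * Real.pi)) * ∫ s in (0:ℝ)..L, ∫ t in (0:ℝ)..L,
            det3 (deriv γ s) (deriv γ t) (γ s - γ t) / ‖γ s - γ t‖ ^ 3|
      ≤ L := by
  have hpi : 0 < Real.pi := Real.pi_pos
  set G : ℝ → ℝ → ℝ :=
    fun s t => det3 (deriv γ s) (deriv γ t) (γ s - γ t) / ‖γ s - γ t‖ ^ 3 with hG
  have hGb : ∀ s t : ℝ, ‖G s t‖ ≤ 1/4 := fun s t => by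
    rw [Real.norm_eq_abs]; exact G_bound γ hdiff hspeed hthick s t
  have hinner : ∀ s : ℝ, ‖∫ t in (0:ℝ)..L, G s t‖ ≤ 1/4 * |L - 0| := fun s =>
    intervalIntegral.norm_integral_le_of_norm_le_const (fun t _ => hGb s t)
  have houter : ‖∫ s in (0:ℝ)..L, ∫ t in (0:ℝ)..L, G s t‖ ≤ (1/4 * |L - 0|) * |L - 0| :=
    intervalIntegral.norm_integral_le_of_norm_le_const (fun s _ => hinner s)
  set W : ℝ := ∫ s in (0:ℝ)..L, ∫ t in (0:ℝ)..L, G s t with hW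
  have hLabs : |L - 0| = L := by rw [sub_zero, abs_of_pos hL]
  rw [hLabs, Real.norm_eq_abs] at houter
  have hWb : |W| ≤ L^2 / 4 := by nlinarith [houter]
  have habs : |1 / (4 * Real.pi) * W| ≤ (L / (2 * Real.pi))^2 := by
    rw [abs_mul, abs_of_pos (by positivity : (0:ℝ) < 1/(4*Real.pi))]
    have h1 : 1/(4*Real.pi) * |W| ≤ 1/(4*Real.pi) * (L^2/4) :=
      mul_le_mul_of_nonneg_left hWb (by positivity)
    refine le_trans h1 ?_
    have hπ4 : Real.pi ≤ 4 := Real.pi_le_four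
    have heq : 1/(4*Real.pi)*(L^2/4) = L^2/(16*Real.pi) := by ring
    rw [heq, div_pow, div_le_div_iff₀ (by positivity) (by positivity)]
    nlinarith [sq_nonneg L, hpi, hπ4,
      mul_nonneg (sq_nonneg L) (mul_nonneg hpi.le (sub_nonneg.mpr hπ4))]
  have hs : Real.sqrt |1 / (4 * Real.pi) * W| ≤ L / (2 * Real.pi) := by
    have h := Real.sqrt_le_sqrt habs
    rwa [Real.sqrt_sq (div_nonneg hL.le (by positivity))] at h
  calc 2 * Real.pi * Real.sqrt |1 / (4 * Real.pi) * W|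
      ≤ 2 * Real.pi * (L / (2 * Real.pi)) :=
        mul_le_mul_of_nonneg_left hs (by positivity)
    _ = L := by field_simp
end
end
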